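/- Let R be an infinite large integral domain, s ∈ ℕ, A an IP*-set in (R, +), and B an IP_s*-set in (R, +). Then there exists an IP*-set D ⊆ R such that for every r ∈ D, rR \ {0} ⊆ A·B = {ab : a ∈ A, b ∈ B}. -/

import Mathlib

/-- `R` is a large integral domain: every nonzero ideal has finite (additive) index. -/
def IsLargeID (R : Type*) [CommRing R] [IsDomain R] : Prop :=
  ∀ I : Ideal R, I ≠ ⊥ → Finite (R ⧸ I)

/-- `A` is an `IP⋆`-set in `(R,+)`: it meets the set of finite sums of every sequence. -/
def IPStar {R : Type*} [AddCommSemigroup R] (A : Set R) : Prop :=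
  ∀ x : Stream' R, ∃ s ∈ Hindman.FS x, s ∈ A

/-- `B` is an `IP_s⋆`-set in `(R,+)`: it meets
`FS({x_n}_{n=1}^s) = {∑_{n ∈ H} x_n : ∅ ≠ H ⊆ {1, …, s}}` for every finite sequence. -/
def IPrStar {R : Type*} [AddCommMonoid R] (s : ℕ) (B : Set R) : Prop :=
  ∀ x : ℕ → R, ∃ H : Finset ℕ, H ⊆ Finset.Icc 1 s ∧ H.Nonempty ∧ (∑ n ∈ H, x n) ∈ B

open Hindman Stream'

section helpers
variable {R : Type*} [CommRing R]

/-- Finite sums of later terms lie in FS of earlier drops. -/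
lemma FS_drop_mono (x : Stream' R) {k l : ℕ} (h : k ≤ l) :
    Hindman.FS (x.drop l) ⊆ Hindman.FS (x.drop k) := by
  obtain ⟨d, rfl⟩ := Nat.exists_eq_add_of_le h
  rw [← Stream'.drop_drop]
  exact Hindman.FS_iter_tail_sub_FS (M := R) _ _

/-- A sum over a finset with all indices ≥ k lies in FS (x.drop k). -/
lemma block_sum (x : Stream' R) (H : Finset ℕ) (k : ℕ) (hne : H.Nonempty)
    (hk : ∀ i ∈ H, k ≤ i) : (∑ i ∈ H, x.get i) ∈ Hindman.FS (x.drop k) := by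
  induction H using Finset.strongInduction generalizing k with
  | _ H ih =>
    set m := H.min' hne with hm
    have hmH : m ∈ H := H.min'_mem hne
    have hkm : k ≤ m := hk m hmH
    refine FS_drop_mono x hkm ?_
    rw [← Finset.add_sum_erase _ _ hmH]
    rcases (H.erase m).eq_empty_or_nonempty with h | h
    · rw [h, Finset.sum_empty, add_zero, ← Stream'.head_drop]
      exact Hindman.FS.head _
    · have hsub : (∑ i ∈ H.erase m, x.get i) ∈ Hindman.FS ((x.drop m).tail) := by
        rw [Stream'.tail_drop']
        refine ih _ (Finset.erase_ssubset hmH) (m + 1) h ?_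
        intro i hi
        have := Finset.min'_lt_of_mem_erase_min' _ hne hi
        omega
      rw [← Stream'.head_drop]
      exact Hindman.FS.cons _ _ hsub

/-- Adding a block sum (indices in [k, N)) to an element of FS (x.drop N)
stays in FS (x.drop k). -/
lemma block_add (x : Stream' R) (H : Finset ℕ) (k N : ℕ) (hne : H.Nonempty)
    (hk : ∀ i ∈ H, k ≤ i ∧ i < N) {m : R} (hm : m ∈ Hindman.FS (x.drop N)) :
    (∑ i ∈ H, x.get i) + m ∈ Hindman.FS (x.drop k) := by
  induction H using Finset.strongInduction generalizing k with
  | _ H ih =>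
    set m0 := H.min' hne with hm0
    have hmH : m0 ∈ H := H.min'_mem hne
    have hkm : k ≤ m0 := (hk m0 hmH).1
    have hm0N : m0 < N := (hk m0 hmH).2
    refine FS_drop_mono x hkm ?_
    rw [← Finset.add_sum_erase _ _ hmH]
    rcases (H.erase m0).eq_empty_or_nonempty with h | h
    · rw [h, Finset.sum_empty, add_zero, ← Stream'.head_drop]
      refine Hindman.FS.cons _ _ ?_
      rw [Stream'.tail_drop']
      exact FS_drop_mono x (by omega) hm
    · have hsub : (∑ i ∈ H.erase m0, x.get i) + m ∈ Hindman.FS ((x.drop m0).tail) := by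
        rw [Stream'.tail_drop']
        refine ih _ (Finset.erase_ssubset hmH) (m0 + 1) h ?_
        intro i hi
        have := Finset.min'_lt_of_mem_erase_min' _ hne hi
        exact ⟨by omega, (hk i (Finset.mem_of_mem_erase hi)).2⟩
      rw [add_assoc, ← Stream'.head_drop]
      exact Hindman.FS.cons _ _ hsub

variable [IsDomain R]

/-- If A is IP* and v ≠ 0, then v·A is IP* in a large integral domain. -/
lemma smul_IPStar (hR : IsLargeID R) {v : R} (hv : v ≠ 0) {A : Set R}
    (hA : IPStar A) : IPStar {r : R | ∃ a ∈ A, r = v * a} := by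
  intro x
  set I : Ideal R := Ideal.span {v} with hI
  have hIbot : I ≠ ⊥ := by
    simpa [hI, Ideal.span_singleton_eq_bot] using hv
  have : Finite (R ⧸ I) := hR I hIbot
  set S : ℕ → R ⧸ I := fun m => Ideal.Quotient.mk I (∑ i ∈ Finset.range m, x.get i) with hS
  obtain ⟨q, hq⟩ := Finite.exists_infinite_fiber S
  have hF : (S ⁻¹' {q}).Infinite := Set.infinite_coe_iff.mp hq
  have hgt : ∀ n : ℕ, ∃ m ∈ S ⁻¹' {q}, n < m := fun n => hF.exists_gt n
  -- build a strictly increasing sequence inside the fiber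
  let g : ℕ → ℕ := fun n => Nat.rec (Classical.choose (hgt 0))
    (fun _ prev => Classical.choose (hgt prev)) n
  have hg0 : g 0 ∈ S ⁻¹' {q} := (Classical.choose_spec (hgt 0)).1
  have hgsucc : ∀ n, g (n + 1) ∈ S ⁻¹' {q} ∧ g n < g (n + 1) := by
    intro n
    exact ⟨(Classical.choose_spec (hgt (g n))).1, (Classical.choose_spec (hgt (g n))).2⟩
  have hgmem : ∀ n, g n ∈ S ⁻¹' {q} := by
    intro n; cases n with
    | zero => exact hg0
    | succ n => exact (hgsucc n).1
  have hglt : ∀ n, g n < g (n + 1) := fun n => (hgsucc n).2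
  have hgle : ∀ {k l : ℕ}, k ≤ l → g k ≤ g l := by
    intro k l h
    induction h with
    | refl => exact le_rfl
    | step _ ih => exact ih.trans (hglt _).le
  set z : Stream' R := fun j => ∑ i ∈ Finset.Ico (g j) (g (j + 1)), x.get i with hz
  have hzI : ∀ j, z j ∈ I := by
    intro j
    have h1 : S (g j) = q := hgmem j
    have h2 : S (g (j + 1)) = q := hgmem (j + 1)
    have : Ideal.Quotient.mk I (∑ i ∈ Finset.range (g (j+1)), x.get i) =
        Ideal.Quotient.mk I (∑ i ∈ Finset.range (g j), x.get i) := by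
      rw [show (Ideal.Quotient.mk I (∑ i ∈ Finset.range (g (j+1)), x.get i)) = S (g (j+1)) from rfl,
        show (Ideal.Quotient.mk I (∑ i ∈ Finset.range (g j), x.get i)) = S (g j) from rfl, h1, h2]
    have hsub := Ideal.Quotient.eq.mp this
    have heq : z j = (∑ i ∈ Finset.range (g (j+1)), x.get i) -
        (∑ i ∈ Finset.range (g j), x.get i) := by
      simp only [hz]
      exact Finset.sum_Ico_eq_sub _ (hglt j).le
    rw [heq]
    exact hsub
  have hza : ∀ j, ∃ a : R, v * a = z j := by
    intro j
    obtain ⟨a, ha⟩ := Ideal.mem_span_singleton'.mp (hzI j)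
    exact ⟨a, by rw [mul_comm]; exact ha⟩
  set a : Stream' R := fun j => Classical.choose (hza j) with haDef
  have hva : ∀ j, v * a j = z j := fun j => Classical.choose_spec (hza j)
  obtain ⟨t, htFS, htA⟩ := hA a
  -- key: v * t ∈ FS (x.drop (g 0))
  have key : ∀ (c : Stream' R) (t : R), t ∈ Hindman.FS c →
      ∀ k, c = a.drop k → v * t ∈ Hindman.FS (x.drop (g k)) := by
    intro c t ht
    induction ht with
    | head' c =>
      intro k hk
      have hhead : c.head = a k := by rw [hk, Stream'.head_drop]; rfl
      rw [hhead, hva k]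
      exact block_sum x _ _ (Finset.nonempty_Ico.mpr (hglt k))
        (fun i hi => (Finset.mem_Ico.mp hi).1)
    | tail' c m h ih =>
      intro k hk
      have : c.tail = a.drop (k + 1) := by rw [hk, Stream'.tail_drop']
      exact FS_drop_mono x (hgle (Nat.le_succ k)) (ih (k+1) this)
    | cons' c m h ih =>
      intro k hk
      have hhead : c.head = a k := by rw [hk, Stream'.head_drop]; rfl
      have htail : c.tail = a.drop (k + 1) := by rw [hk, Stream'.tail_drop']
      have hvm := ih (k+1) htail
      rw [hhead, mul_add, hva k]
      exact block_add x _ _ _ (Finset.nonempty_Ico.mpr (hglt k))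
        (fun i hi => ⟨(Finset.mem_Ico.mp hi).1, (Finset.mem_Ico.mp hi).2⟩) hvm
  have : v * t ∈ Hindman.FS (x.drop (g 0)) := key a t htFS 0 (by rw [Stream'.drop_zero])
  exact ⟨v * t, Hindman.FS_iter_tail_sub_FS x (g 0) this, t, htA, rfl⟩

lemma IPStar_univ : IPStar (Set.univ : Set R) :=
  fun x => ⟨x.head, Hindman.FS.head x, trivial⟩

lemma IPStar.inter {A B : Set R} (hA : IPStar A) (hB : IPStar B) : IPStar (A ∩ B) := by
  intro x
  have sfin : ({A ∩ Hindman.FS x, Aᶜ ∩ Hindman.FS x} : Set (Set R)).Finite :=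
    (Set.finite_singleton _).insert _
  have scov : Hindman.FS x ⊆ ⋃₀ {A ∩ Hindman.FS x, Aᶜ ∩ Hindman.FS x} := by
    intro y hy
    by_cases h : y ∈ A
    · exact Set.mem_sUnion.mpr ⟨A ∩ Hindman.FS x, Set.mem_insert _ _, h, hy⟩
    · exact Set.mem_sUnion.mpr ⟨Aᶜ ∩ Hindman.FS x,
        Set.mem_insert_of_mem _ rfl, h, hy⟩
  obtain ⟨c, hc, b, hb⟩ := Hindman.FS_partition_regular x _ sfin scov
  rcases hc with rfl | hc
  · obtain ⟨t, htFS, htB⟩ := hB b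
    have := hb htFS
    exact ⟨t, this.2, this.1, htB⟩
  · rw [Set.mem_singleton_iff] at hc
    subst hc
    obtain ⟨t, htFS, htA⟩ := hA b
    exact absurd htA (hb htFS).1
end helpers

theorem stmt_9 {R : Type*} [CommRing R] [IsDomain R] [Infinite R]
    (hR : IsLargeID R) (s : ℕ) (hs : 0 < s) (A B : Set R)
    (hA : IPStar A) (hB : IPrStar s B) :
    ∃ D : Set R, IPStar D ∧ ∀ r ∈ D, ∀ x : R, r * x ≠ 0 →
      ∃ a ∈ A, ∃ b ∈ B, r * x = a * b := by
  classical
  -- choose coefficients with all nonempty subset sums nonzero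
  have hc : ∀ n : ℕ, ∃ c : ℕ → R, ∀ H ⊆ Finset.range n, H.Nonempty → (∑ i ∈ H, c i) ≠ 0 := by
    intro n
    induction n with
    | zero =>
      refine ⟨fun _ => 0, fun H hH hne => ?_⟩
      rw [Finset.range_zero, Finset.subset_empty] at hH
      exact absurd hH (Finset.nonempty_iff_ne_empty.mp hne)
    | succ n ih =>
      obtain ⟨c, hcn⟩ := ih
      have hbadfin : (Set.range (fun H : (Finset.range n).powerset => -∑ i ∈ (H : Finset ℕ), c i)).Finite :=
        Set.finite_range _
      obtain ⟨w, hw⟩ := hbadfin.infinite_compl.nonempty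
      refine ⟨Function.update c n w, ?_⟩
      intro H hH hne
      by_cases hn : n ∈ H
      · rw [← Finset.add_sum_erase _ _ hn]
        have herase : H.erase n ⊆ Finset.range n := by
          intro i hi
          have h1 := Finset.mem_of_mem_erase hi
          have h2 := Finset.ne_of_mem_erase hi
          have := Finset.mem_range.mp (hH h1)
          exact Finset.mem_range.mpr (by omega)
        have hsum : (∑ i ∈ H.erase n, Function.update c n w i) = ∑ i ∈ H.erase n, c i := by
          refine Finset.sum_congr rfl ?_
          intro i hi
          exact Function.update_of_ne (Finset.ne_of_mem_erase hi) _ _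
        rw [Function.update_self, hsum]
        intro habs
        apply hw
        refine ⟨⟨H.erase n, Finset.mem_powerset.mpr herase⟩, ?_⟩
        show -∑ i ∈ H.erase n, c i = w
        linear_combination -habs
      · have hHsub : H ⊆ Finset.range n := by
          intro i hi
          have h1 := Finset.mem_range.mp (hH hi)
          have h2 : i ≠ n := by rintro rfl; exact hn hi
          exact Finset.mem_range.mpr (by omega)
        have hsum : (∑ i ∈ H, Function.update c n w i) = ∑ i ∈ H, c i := by
          refine Finset.sum_congr rfl ?_
          intro i hi
          exact Function.update_of_ne (by rintro rfl; exact hn hi) _ _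
        rw [hsum]
        exact hcn H hHsub hne
  obtain ⟨c, hcne⟩ := hc (s + 1)
  set P : Finset (Finset ℕ) := (Finset.Icc 1 s).powerset.filter (fun H => H.Nonempty) with hP
  set D : Set R := ⋂ H ∈ P, {r : R | ∃ a ∈ A, r = (∑ i ∈ H, c i) * a} with hD
  have hvne : ∀ H ∈ P, (∑ i ∈ H, c i) ≠ 0 := by
    intro H hH
    rw [hP, Finset.mem_filter, Finset.mem_powerset] at hH
    refine hcne H ?_ hH.2
    intro i hi
    have := Finset.mem_Icc.mp (hH.1 hi)
    exact Finset.mem_range.mpr (by omega)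
  have hDIP : IPStar D := by
    rw [hD]
    have : ∀ (Q : Finset (Finset ℕ)), (∀ H ∈ Q, (∑ i ∈ H, c i) ≠ 0) →
        IPStar (⋂ H ∈ Q, {r : R | ∃ a ∈ A, r = (∑ i ∈ H, c i) * a}) := by
      intro Q
      induction Q using Finset.induction with
      | empty => intro _; simpa using (IPStar_univ (R := R))
      | @insert H Q hnotmem ih =>
        intro hQ
        rw [Finset.set_biInter_insert]
        exact IPStar.inter (smul_IPStar hR (hQ H (Finset.mem_insert_self _ _)) hA)
          (ih (fun H' hH' => hQ H' (Finset.mem_insert_of_mem hH')))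
    exact this P hvne
  refine ⟨D, hDIP, ?_⟩
  intro r hr x _
  obtain ⟨H, hH1, hH2, hH3⟩ := hB (fun n => c n * x)
  have hHP : H ∈ P := by
    rw [hP, Finset.mem_filter, Finset.mem_powerset]
    exact ⟨hH1, hH2⟩
  have hrH : r ∈ {r : R | ∃ a ∈ A, r = (∑ i ∈ H, c i) * a} := by
    rw [hD] at hr
    exact Set.mem_iInter₂.mp hr H hHP
  obtain ⟨a, haA, hra⟩ := hrH
  refine ⟨a, haA, ∑ n ∈ H, c n * x, hH3, ?_⟩
  rw [← Finset.sum_mul, hra]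
  ring
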